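/- Let H be a complex Hilbert space and L, M closed linear subspaces with Q = L ∩ M, c(L,M) < 1, and f a continuous linear functional on the closed subspace L + M satisfying f(x) = 0 for x ∈ M. Then the operator norm of f on L + M is bounded as ‖f‖_{(L+M)*} ≤ ‖f|_L‖_{L*} / √(1 − c(L,M)²), where f|_L is the restriction of f to L. -/

import Mathlib

open scoped InnerProductSpace Pointwise

/-- The inclination `c(L,M)` of two subspaces `L`, `M` of a complex Hilbert space:
the supremum of `|⟪u,v⟫| / (‖u‖‖v‖)` over nonzero `u ∈ L ⊖ Q` and nonzero `v ∈ M ⊖ Q`,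
where `Q = L ⊓ M` and `L ⊖ Q = L ⊓ Qᗮ`, `M ⊖ Q = M ⊓ Qᗮ`. -/
noncomputable def inclination {H : Type*} [NormedAddCommGroup H] [InnerProductSpace ℂ H]
    (L M : Submodule ℂ H) : ℝ :=
  sSup {r : ℝ | ∃ u ∈ L ⊓ (L ⊓ M)ᗮ, ∃ v ∈ M ⊓ (L ⊓ M)ᗮ,
    u ≠ 0 ∧ v ≠ 0 ∧ r = ‖⟪u, v⟫_ℂ‖ / (‖u‖ * ‖v‖)}

/-- The inclusion of a subspace `L` into a larger subspace `N`, as a continuous linear map. -/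
noncomputable def inclCLM {H : Type*} [NormedAddCommGroup H] [InnerProductSpace ℂ H]
    {L N : Submodule ℂ H} (h : L ≤ N) : L →L[ℂ] N :=
  (Submodule.inclusion h).mkContinuous 1 (fun x => by
    simp [Submodule.inclusion, LinearMap.codRestrict])

set_option maxHeartbeats 1600000 in
theorem stmt_14 {H : Type*} [NormedAddCommGroup H] [InnerProductSpace ℂ H] [CompleteSpace H]
    (L M : Submodule ℂ H) (hL : IsClosed (L : Set H)) (hM : IsClosed (M : Set H))
    (hLQ : ∃ u ∈ L ⊓ (L ⊓ M)ᗮ, u ≠ 0) (hMQ : ∃ v ∈ M ⊓ (L ⊓ M)ᗮ, v ≠ 0)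
    (hc : inclination L M < 1)
    (f : (L ⊔ M : Submodule ℂ H) →L[ℂ] ℂ)
    (hfM : ∀ x : (L ⊔ M : Submodule ℂ H), (x : H) ∈ M → f x = 0) :
    ‖f‖ ≤ ‖f.comp (inclCLM (le_sup_left : L ≤ L ⊔ M))‖ /
      Real.sqrt (1 - inclination L M ^ 2) := by
  set c := inclination L M with hcdef
  set S := {r : ℝ | ∃ u ∈ L ⊓ (L ⊓ M)ᗮ, ∃ v ∈ M ⊓ (L ⊓ M)ᗮ,
    u ≠ 0 ∧ v ≠ 0 ∧ r = ‖⟪u, v⟫_ℂ‖ / (‖u‖ * ‖v‖)} with hSdef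
  have hBdd : BddAbove S := by
    refine ⟨1, fun r hr => ?_⟩
    obtain ⟨u, hu, v, hv, hu0, hv0, rfl⟩ := hr
    have h1 : ‖⟪u, v⟫_ℂ‖ ≤ ‖u‖ * ‖v‖ := norm_inner_le_norm u v
    have h2 : (0:ℝ) < ‖u‖ * ‖v‖ :=
      mul_pos (norm_pos_iff.2 hu0) (norm_pos_iff.2 hv0)
    exact div_le_one_of_le₀ h1 h2.le
  have hcS : c = sSup S := rfl
  have hc0 : 0 ≤ c := by
    obtain ⟨u₀, hu₀, hu₀0⟩ := hLQ
    obtain ⟨v₀, hv₀, hv₀0⟩ := hMQ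
    have hmem : ‖⟪u₀, v₀⟫_ℂ‖ / (‖u₀‖ * ‖v₀‖) ∈ S :=
      ⟨u₀, hu₀, v₀, hv₀, hu₀0, hv₀0, rfl⟩
    have := le_csSup hBdd hmem
    rw [← hcS] at this
    have h0 : (0:ℝ) ≤ ‖⟪u₀, v₀⟫_ℂ‖ / (‖u₀‖ * ‖v₀‖) := by positivity
    linarith
  -- key inner product bound
  have hkey : ∀ u ∈ L ⊓ (L ⊓ M)ᗮ, ∀ v ∈ M ⊓ (L ⊓ M)ᗮ,
      ‖⟪u, v⟫_ℂ‖ ≤ c * (‖u‖ * ‖v‖) := by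
    intro u hu v hv
    by_cases hu0 : u = 0
    · simp [hu0]
    by_cases hv0 : v = 0
    · simp [hv0]
    have hmem : ‖⟪u, v⟫_ℂ‖ / (‖u‖ * ‖v‖) ∈ S := ⟨u, hu, v, hv, hu0, hv0, rfl⟩
    have hle := le_csSup hBdd hmem
    rw [← hcS] at hle
    have hpos : (0:ℝ) < ‖u‖ * ‖v‖ :=
      mul_pos (norm_pos_iff.2 hu0) (norm_pos_iff.2 hv0)
    calc ‖⟪u, v⟫_ℂ‖ = ‖⟪u, v⟫_ℂ‖ / (‖u‖ * ‖v‖) * (‖u‖ * ‖v‖) := by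
          field_simp
      _ ≤ c * (‖u‖ * ‖v‖) := by
          apply mul_le_mul_of_nonneg_right hle hpos.le
  have hsqrtpos : 0 < Real.sqrt (1 - c ^ 2) := by
    apply Real.sqrt_pos.2
    nlinarith
  set N := ‖f.comp (inclCLM (le_sup_left : L ≤ L ⊔ M))‖ with hNdef
  have hN0 : 0 ≤ N :=
    hNdef ▸ norm_nonneg (f.comp (inclCLM (le_sup_left : L ≤ L ⊔ M)))
  -- complete space instance on Q
  have hQ : IsClosed ((L ⊓ M : Submodule ℂ H) : Set H) := by
    rw [Submodule.coe_inf]; exact hL.inter hM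
  haveI : CompleteSpace (L ⊓ M : Submodule ℂ H) := hQ.completeSpace_coe
  apply ContinuousLinearMap.opNorm_le_bound _ (by positivity)
  intro x
  obtain ⟨u, hu, v, hv, hx⟩ := Submodule.mem_sup.1 x.2
  set Q := L ⊓ M with hQdef
  set q : H := (Submodule.orthogonalProjectionOnto Q u : H) with hqdef
  set u' : H := u - q with hu'def
  have hqQ : q ∈ Q := (Submodule.orthogonalProjectionOnto Q u).2
  have hu'L : u' ∈ L := L.sub_mem hu (Submodule.mem_inf.1 hqQ).1
  have hu'o : u' ∈ Qᗮ := Submodule.sub_starProjection_mem_orthogonal (K := Q) u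
  set v₁ : H := v + q with hv₁def
  have hv₁M : v₁ ∈ M := M.add_mem hv (Submodule.mem_inf.1 hqQ).2
  set q'' : H := (Submodule.orthogonalProjectionOnto Q v₁ : H) with hq''def
  set v'' : H := v₁ - q'' with hv''def
  have hq''Q : q'' ∈ Q := (Submodule.orthogonalProjectionOnto Q v₁).2
  have hv''M : v'' ∈ M := M.sub_mem hv₁M (Submodule.mem_inf.1 hq''Q).2
  have hv''o : v'' ∈ Qᗮ := Submodule.sub_starProjection_mem_orthogonal (K := Q) v₁
  have hxdec : (x : H) = u' + v'' + q'' := by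
    rw [hu'def, hv''def, hv₁def, ← hx]; abel
  -- orthogonality to q''
  have hiu : ⟪u', q''⟫_ℂ = 0 := (Submodule.mem_orthogonal' Q u').1 hu'o q'' hq''Q
  have hiv : ⟪v'', q''⟫_ℂ = 0 := (Submodule.mem_orthogonal' Q v'').1 hv''o q'' hq''Q
  have hiw : ⟪u' + v'', q''⟫_ℂ = 0 := by rw [inner_add_left, hiu, hiv]; ring
  -- norm computations
  have hnx : ‖(x : H)‖ ^ 2 = ‖u' + v''‖ ^ 2 + ‖q''‖ ^ 2 := by
    rw [hxdec, @norm_add_sq ℂ _ _ _ _ (u' + v'') q'', hiw]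
    simp
  have hnuv : ‖u' + v''‖ ^ 2 =
      ‖u'‖ ^ 2 + 2 * Complex.re ⟪u', v''⟫_ℂ + ‖v''‖ ^ 2 :=
    @norm_add_sq ℂ _ _ _ _ u' v''
  have hinner : ‖⟪u', v''⟫_ℂ‖ ≤ c * (‖u'‖ * ‖v''‖) :=
    hkey u' ⟨hu'L, hu'o⟩ v'' ⟨hv''M, hv''o⟩
  have hre : -(c * (‖u'‖ * ‖v''‖)) ≤ Complex.re ⟪u', v''⟫_ℂ := by
    have h1 : |Complex.re ⟪u', v''⟫_ℂ| ≤ ‖⟪u', v''⟫_ℂ‖ := Complex.abs_re_le_norm _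
    have h2 := neg_abs_le (Complex.re ⟪u', v''⟫_ℂ)
    linarith
  have hkey2 : (1 - c ^ 2) * ‖u'‖ ^ 2 ≤ ‖(x : H)‖ ^ 2 := by
    nlinarith [sq_nonneg (c * ‖u'‖ - ‖v''‖), sq_nonneg ‖q''‖, norm_nonneg u',
      norm_nonneg v'']
  have hnorm : Real.sqrt (1 - c ^ 2) * ‖u'‖ ≤ ‖(x : H)‖ := by
    have h1 : (Real.sqrt (1 - c ^ 2) * ‖u'‖) ^ 2 ≤ ‖(x : H)‖ ^ 2 := by
      rw [mul_pow, Real.sq_sqrt (by nlinarith : (0:ℝ) ≤ 1 - c ^ 2)]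
      exact hkey2
    have h2 : 0 ≤ Real.sqrt (1 - c ^ 2) * ‖u'‖ := by positivity
    nlinarith [norm_nonneg (x : H)]
  -- f x = f (incl u')
  set a : (L ⊔ M : Submodule ℂ H) := ⟨u', (le_sup_left : L ≤ L ⊔ M) hu'L⟩ with hadef
  have hfx : f x = f a := by
    have hmem : ((x - a : (L ⊔ M : Submodule ℂ H)) : H) ∈ M := by
      have : ((x - a : (L ⊔ M : Submodule ℂ H)) : H) = v'' + q'' := by
        push_cast [hadef, hxdec]; abel
      rw [this]
      exact M.add_mem hv''M (Submodule.mem_inf.1 hq''Q).2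
    have h0 := hfM _ hmem
    rw [map_sub] at h0
    exact sub_eq_zero.1 h0
  have hfa : f a = (f.comp (inclCLM (le_sup_left : L ≤ L ⊔ M))) ⟨u', hu'L⟩ := by
    have h1 : (inclCLM (le_sup_left : L ≤ L ⊔ M)) ⟨u', hu'L⟩ = a := by
      apply Subtype.ext
      rfl
    rw [ContinuousLinearMap.comp_apply, h1]
  have hfb : ‖f x‖ ≤ N * ‖u'‖ := by
    rw [hfx, hfa]
    calc ‖(f.comp (inclCLM (le_sup_left : L ≤ L ⊔ M))) ⟨u', hu'L⟩‖
        ≤ N * ‖(⟨u', hu'L⟩ : L)‖ :=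
          (f.comp (inclCLM (le_sup_left : L ≤ L ⊔ M))).le_opNorm ⟨u', hu'L⟩
      _ = N * ‖u'‖ := rfl
  have hxn : ‖x‖ = ‖(x : H)‖ := rfl
  rw [hxn, div_mul_eq_mul_div, le_div_iff₀ hsqrtpos]
  nlinarith [norm_nonneg u', norm_nonneg (x : H)]
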